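/- Let n ≥ 2. Then ⟨I_n, I_n⟩ = n(n−1)/2 > 0, and for every nonzero symmetric real n×n matrix α (αᵀ = α) with tr α = 0 one has ⟨α,α⟩ = −½ Σ_{i,j} α_{ij}² < 0. Hence the restriction of ⟨·,·⟩ to the space of symmetric matrices is a Lorentzian form: it is positive on the line spanned by the identity matrix and negative definite on the complementary hyperplane of trace-free symmetric matrices. -/
import Mathlib


open Matrix

/-- The symmetric bilinear form `⟨α,β⟩ = ½((tr α)(tr β) − tr(αβ))` on `n×n` real matrices. -/
noncomputable def bform (n : ℕ) (α β : Matrix (Fin n) (Fin n) ℝ) : ℝ :=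
  (1 / 2) * (Matrix.trace α * Matrix.trace β - Matrix.trace (α * β))

/-- On symmetric matrices the form `⟨·,·⟩` is Lorentzian: `⟨I,I⟩ = n(n−1)/2 > 0`, and on
the complementary hyperplane of trace-free symmetric matrices it is negative definite,
with `⟨α,α⟩ = −½ Σᵢⱼ αᵢⱼ²` for symmetric trace-free `α`. -/
theorem bform_lorentzian_on_symmetric (n : ℕ) (hn : 2 ≤ n) :
    bform n 1 1 = (n : ℝ) * ((n : ℝ) - 1) / 2 ∧
    0 < bform n 1 1 ∧
    ∀ α : Matrix (Fin n) (Fin n) ℝ, αᵀ = α → Matrix.trace α = 0 →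
      (bform n α α = -(1 / 2) * ∑ i : Fin n, ∑ j : Fin n, (α i j) ^ 2 ∧
        (α ≠ 0 → bform n α α < 0)) := by
  have h1 : bform n 1 1 = (n : ℝ) * ((n : ℝ) - 1) / 2 := by
    simp [bform, Matrix.trace_one]
    ring
  have hn2 : (2 : ℝ) ≤ (n : ℝ) := by exact_mod_cast hn
  refine ⟨h1, ?_, ?_⟩
  · rw [h1]
    have : (0:ℝ) < (n : ℝ) * ((n : ℝ) - 1) := by nlinarith
    linarith
  · intro α hsym htr
    have key : bform n α α = -(1 / 2) * ∑ i : Fin n, ∑ j : Fin n, (α i j) ^ 2 := by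
      have htrαα : Matrix.trace (α * α) = ∑ i : Fin n, ∑ j : Fin n, (α i j) ^ 2 := by
        simp only [Matrix.trace, Matrix.diag, Matrix.mul_apply]
        refine Finset.sum_congr rfl fun i _ => Finset.sum_congr rfl fun j _ => ?_
        have : α j i = α i j := by conv_lhs => rw [← hsym, Matrix.transpose_apply]
        rw [this]; ring
      rw [bform, htr, htrαα]; ring
    refine ⟨key, fun hne => ?_⟩
    rw [key]
    have hpos : 0 < ∑ i : Fin n, ∑ j : Fin n, (α i j) ^ 2 := by
      obtain ⟨i, j, hij⟩ : ∃ i j, α i j ≠ 0 := by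
        by_contra h
        push_neg at h
        exact hne (by ext i j; simp [h])
      have h1 : (0:ℝ) < (α i j) ^ 2 := by positivity
      have h2 : (α i j) ^ 2 ≤ ∑ j : Fin n, (α i j) ^ 2 :=
        Finset.single_le_sum (f := fun k => (α i k) ^ 2) (fun k _ => sq_nonneg _) (Finset.mem_univ j)
      have h3 : ∑ j : Fin n, (α i j) ^ 2 ≤ ∑ i : Fin n, ∑ j : Fin n, (α i j) ^ 2 :=
        Finset.single_le_sum (f := fun k => ∑ j : Fin n, (α k j) ^ 2) (fun k _ => Finset.sum_nonneg fun _ _ => sq_nonneg _)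
          (Finset.mem_univ i)
      linarith
    linarith
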